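/- The reduction relation →_R generated (as compatible closure) by the axioms (β): (λx.M)N ▷ M[x:=N], (π₁): π₁⟨M,N⟩ ▷ M, (π₂): π₂⟨M,N⟩ ▷ N, (δπ): ⟨M,N⟩P ▷ ⟨M P, N P⟩, (π₁λ): π₁(λx.M) ▷ λx.π₁M, and (π₂λ): π₂(λx.M) ▷ λx.π₂M, is confluent: if M →_R* N₁ and M →_R* N₂, then there exists P with N₁ →_R* P and N₂ →_R* P. -/

import Mathlib

/-- Untyped lambda terms with pairing and projections, de Bruijn representation
(so terms are automatically identified up to alpha-equivalence). -/
inductive Tm : Type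
  | var : Nat → Tm
  | app : Tm → Tm → Tm
  | lam : Tm → Tm
  | pair : Tm → Tm → Tm
  | p1 : Tm → Tm
  | p2 : Tm → Tm

/-- Shift free de Bruijn indices ≥ d up by one. -/
def Tm.lift (d : Nat) : Tm → Tm
  | .var n => if n < d then .var n else .var (n + 1)
  | .app a b => .app (a.lift d) (b.lift d)
  | .lam a => .lam (a.lift (d + 1))
  | .pair a b => .pair (a.lift d) (b.lift d)
  | .p1 a => .p1 (a.lift d)
  | .p2 a => .p2 (a.lift d)

/-- Capture-avoiding substitution of s for variable k. -/
def Tm.subst : Tm → Nat → Tm → Tm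
  | .var n, k, s => if n = k then s else if n < k then .var n else .var (n - 1)
  | .app a b, k, s => .app (a.subst k s) (b.subst k s)
  | .lam a, k, s => .lam (a.subst (k + 1) (s.lift 0))
  | .pair a b, k, s => .pair (a.subst k s) (b.subst k s)
  | .p1 a, k, s => .p1 (a.subst k s)
  | .p2 a, k, s => .p2 (a.subst k s)

/-- One-step R-reduction: compatible closure of (β), (π₁), (π₂), (δπ), (π₁λ), (π₂λ). -/
inductive StepR : Tm → Tm → Prop
  | beta {M N} : StepR (.app (.lam M) N) (M.subst 0 N)
  | pi1 {M N} : StepR (.p1 (.pair M N)) M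
  | pi2 {M N} : StepR (.p2 (.pair M N)) N
  | dpi {M N P} : StepR (.app (.pair M N) P) (.pair (.app M P) (.app N P))
  | pi1lam {M} : StepR (.p1 (.lam M)) (.lam (.p1 M))
  | pi2lam {M} : StepR (.p2 (.lam M)) (.lam (.p2 M))
  | lam {M M'} : StepR M M' → StepR (.lam M) (.lam M')
  | appL {M M' N} : StepR M M' → StepR (.app M N) (.app M' N)
  | appR {M N N'} : StepR N N' → StepR (.app M N) (.app M N')
  | pairL {M M' N} : StepR M M' → StepR (.pair M N) (.pair M' N)
  | pairR {M N N'} : StepR N N' → StepR (.pair M N) (.pair M N')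
  | p1 {M M'} : StepR M M' → StepR (.p1 M) (.p1 M')
  | p2 {M M'} : StepR M M' → StepR (.p2 M) (.p2 M')

-- Auxiliary development: de Bruijn lemmas, parallel reduction, complete developments

theorem Tm.lift_lift : ∀ (M : Tm) (i j : Nat), i ≤ j →
    (M.lift j).lift i = (M.lift i).lift (j + 1)
  | .var n, i, j, h => by
    simp only [Tm.lift]
    split_ifs <;> simp only [Tm.lift] <;> split_ifs <;> simp_all <;> omega
  | .app a b, i, j, h => by simp [Tm.lift, Tm.lift_lift a i j h, Tm.lift_lift b i j h]
  | .lam a, i, j, h => by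
    simp [Tm.lift, Tm.lift_lift a (i+1) (j+1) (by omega)]
  | .pair a b, i, j, h => by simp [Tm.lift, Tm.lift_lift a i j h, Tm.lift_lift b i j h]
  | .p1 a, i, j, h => by simp [Tm.lift, Tm.lift_lift a i j h]
  | .p2 a, i, j, h => by simp [Tm.lift, Tm.lift_lift a i j h]

theorem Tm.subst_lift : ∀ (M : Tm) (k : Nat) (s : Tm), (M.lift k).subst k s = M
  | .var n, k, s => by
    simp only [Tm.lift]
    split_ifs <;> simp only [Tm.subst] <;> split_ifs <;> simp_all <;> omega
  | .app a b, k, s => by simp [Tm.lift, Tm.subst, Tm.subst_lift a k s, Tm.subst_lift b k s]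
  | .lam a, k, s => by simp [Tm.lift, Tm.subst, Tm.subst_lift a (k+1) (s.lift 0)]
  | .pair a b, k, s => by simp [Tm.lift, Tm.subst, Tm.subst_lift a k s, Tm.subst_lift b k s]
  | .p1 a, k, s => by simp [Tm.lift, Tm.subst, Tm.subst_lift a k s]
  | .p2 a, k, s => by simp [Tm.lift, Tm.subst, Tm.subst_lift a k s]

theorem Tm.lift_subst_ge : ∀ (M : Tm) (k d : Nat) (s : Tm), k ≤ d →
    (M.subst k s).lift d = (M.lift (d + 1)).subst k (s.lift d)
  | .var n, k, d, s, h => by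
    simp only [Tm.subst, Tm.lift]
    split_ifs <;> simp only [Tm.subst, Tm.lift] <;> split_ifs <;> simp_all <;> omega
  | .app a b, k, d, s, h => by
    simp [Tm.subst, Tm.lift, Tm.lift_subst_ge a k d s h, Tm.lift_subst_ge b k d s h]
  | .lam a, k, d, s, h => by
    simp [Tm.subst, Tm.lift, Tm.lift_subst_ge a (k+1) (d+1) (s.lift 0) (by omega),
      Tm.lift_lift s 0 d (by omega)]
  | .pair a b, k, d, s, h => by
    simp [Tm.subst, Tm.lift, Tm.lift_subst_ge a k d s h, Tm.lift_subst_ge b k d s h]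
  | .p1 a, k, d, s, h => by simp [Tm.subst, Tm.lift, Tm.lift_subst_ge a k d s h]
  | .p2 a, k, d, s, h => by simp [Tm.subst, Tm.lift, Tm.lift_subst_ge a k d s h]

theorem Tm.lift_subst_lt : ∀ (M : Tm) (k d : Nat) (s : Tm), d ≤ k →
    (M.subst k s).lift d = (M.lift d).subst (k + 1) (s.lift d)
  | .var n, k, d, s, h => by
    simp only [Tm.subst, Tm.lift]
    split_ifs <;> simp only [Tm.subst, Tm.lift] <;> split_ifs <;> simp_all <;> omega
  | .app a b, k, d, s, h => by
    simp [Tm.subst, Tm.lift, Tm.lift_subst_lt a k d s h, Tm.lift_subst_lt b k d s h]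
  | .lam a, k, d, s, h => by
    simp [Tm.subst, Tm.lift, Tm.lift_subst_lt a (k+1) (d+1) (s.lift 0) (by omega),
      Tm.lift_lift s 0 d (by omega)]
  | .pair a b, k, d, s, h => by
    simp [Tm.subst, Tm.lift, Tm.lift_subst_lt a k d s h, Tm.lift_subst_lt b k d s h]
  | .p1 a, k, d, s, h => by simp [Tm.subst, Tm.lift, Tm.lift_subst_lt a k d s h]
  | .p2 a, k, d, s, h => by simp [Tm.subst, Tm.lift, Tm.lift_subst_lt a k d s h]

theorem Tm.subst_subst : ∀ (M : Tm) (j k : Nat) (N s : Tm), j ≤ k →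
    (M.subst j N).subst k s = (M.subst (k + 1) (s.lift j)).subst j (N.subst k s)
  | .var n, j, k, N, s, h => by
    simp only [Tm.subst]
    split_ifs <;> (try simp only [Tm.subst]) <;> (try split_ifs) <;>
      first
      | rfl
      | (exfalso; omega)
      | (rw [Tm.subst_lift])
      | (simp_all; omega)
  | .app a b, j, k, N, s, h => by
    simp [Tm.subst, Tm.subst_subst a j k N s h, Tm.subst_subst b j k N s h]
  | .lam a, j, k, N, s, h => by
    simp only [Tm.subst, Tm.subst_subst a (j+1) (k+1) (N.lift 0) (s.lift 0) (by omega)]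
    rw [Tm.lift_lift s 0 j (by omega), ← Tm.lift_subst_lt N k 0 s (by omega)]
  | .pair a b, j, k, N, s, h => by
    simp [Tm.subst, Tm.subst_subst a j k N s h, Tm.subst_subst b j k N s h]
  | .p1 a, j, k, N, s, h => by simp [Tm.subst, Tm.subst_subst a j k N s h]
  | .p2 a, j, k, N, s, h => by simp [Tm.subst, Tm.subst_subst a j k N s h]

/-- Parallel reduction. -/
inductive Par : Tm → Tm → Prop
  | var (n) : Par (.var n) (.var n)
  | app {M M' N N'} : Par M M' → Par N N' → Par (.app M N) (.app M' N')
  | lam {M M'} : Par M M' → Par (.lam M) (.lam M')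
  | pair {M M' N N'} : Par M M' → Par N N' → Par (.pair M N) (.pair M' N')
  | p1 {M M'} : Par M M' → Par (.p1 M) (.p1 M')
  | p2 {M M'} : Par M M' → Par (.p2 M) (.p2 M')
  | beta {M M' N N'} : Par M M' → Par N N' → Par (.app (.lam M) N) (M'.subst 0 N')
  | pi1 {M M' N} : Par M M' → Par (.p1 (.pair M N)) M'
  | pi2 {M N N'} : Par N N' → Par (.p2 (.pair M N)) N'
  | dpi {M M' N N' P P'} : Par M M' → Par N N' → Par P P' →
      Par (.app (.pair M N) P) (.pair (.app M' P') (.app N' P'))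
  | pi1lam {M M'} : Par M M' → Par (.p1 (.lam M)) (.lam (.p1 M'))
  | pi2lam {M M'} : Par M M' → Par (.p2 (.lam M)) (.lam (.p2 M'))

theorem Par.refl : ∀ M : Tm, Par M M
  | .var n => .var n
  | .app a b => .app (Par.refl a) (Par.refl b)
  | .lam a => .lam (Par.refl a)
  | .pair a b => .pair (Par.refl a) (Par.refl b)
  | .p1 a => .p1 (Par.refl a)
  | .p2 a => .p2 (Par.refl a)

theorem Par.lift {M M' : Tm} (h : Par M M') : ∀ d, Par (M.lift d) (M'.lift d) := by
  induction h with
  | var n => intro d; simp only [Tm.lift]; split_ifs <;> exact Par.refl _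
  | app _ _ ih1 ih2 => exact fun d => .app (ih1 d) (ih2 d)
  | lam _ ih => exact fun d => .lam (ih (d+1))
  | pair _ _ ih1 ih2 => exact fun d => .pair (ih1 d) (ih2 d)
  | p1 _ ih => exact fun d => .p1 (ih d)
  | p2 _ ih => exact fun d => .p2 (ih d)
  | beta _ _ ih1 ih2 =>
    intro d
    rw [Tm.lift_subst_ge _ 0 d _ (by omega)]
    exact .beta (ih1 (d+1)) (ih2 d)
  | pi1 _ ih => exact fun d => .pi1 (ih d)
  | pi2 _ ih => exact fun d => .pi2 (ih d)
  | dpi _ _ _ ih1 ih2 ih3 => exact fun d => .dpi (ih1 d) (ih2 d) (ih3 d)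
  | pi1lam _ ih => exact fun d => .pi1lam (ih (d+1))
  | pi2lam _ ih => exact fun d => .pi2lam (ih (d+1))

theorem Par.subst {M M' : Tm} (h : Par M M') :
    ∀ (k : Nat) {s s' : Tm}, Par s s' → Par (M.subst k s) (M'.subst k s') := by
  induction h with
  | var n =>
    intro k s s' hs; simp only [Tm.subst]; split_ifs
    · exact hs
    · exact Par.refl _
    · exact Par.refl _
  | app _ _ ih1 ih2 => exact fun k _ _ hs => .app (ih1 k hs) (ih2 k hs)
  | lam _ ih => exact fun k _ _ hs => .lam (ih (k+1) (hs.lift 0))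
  | pair _ _ ih1 ih2 => exact fun k _ _ hs => .pair (ih1 k hs) (ih2 k hs)
  | p1 _ ih => exact fun k _ _ hs => .p1 (ih k hs)
  | p2 _ ih => exact fun k _ _ hs => .p2 (ih k hs)
  | beta _ _ ih1 ih2 =>
    intro k s s' hs
    rw [Tm.subst_subst _ 0 k _ _ (by omega)]
    exact .beta (ih1 (k+1) (hs.lift 0)) (ih2 k hs)
  | pi1 _ ih => exact fun k _ _ hs => .pi1 (ih k hs)
  | pi2 _ ih => exact fun k _ _ hs => .pi2 (ih k hs)
  | dpi _ _ _ ih1 ih2 ih3 => exact fun k _ _ hs => .dpi (ih1 k hs) (ih2 k hs) (ih3 k hs)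
  | pi1lam _ ih => exact fun k _ _ hs => .pi1lam (ih (k+1) (hs.lift 0))
  | pi2lam _ ih => exact fun k _ _ hs => .pi2lam (ih (k+1) (hs.lift 0))

theorem Par.lam_inv {M T : Tm} (h : Par (.lam M) T) : ∃ M', T = .lam M' ∧ Par M M' := by
  cases h with
  | lam h => exact ⟨_, rfl, h⟩

theorem Par.pair_inv {M N T : Tm} (h : Par (.pair M N) T) :
    ∃ M' N', T = .pair M' N' ∧ Par M M' ∧ Par N N' := by
  cases h with
  | pair h1 h2 => exact ⟨_, _, rfl, h1, h2⟩

/-- Complete development. -/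
def cd : Tm → Tm
  | .var n => .var n
  | .lam M => .lam (cd M)
  | .pair M N => .pair (cd M) (cd N)
  | .app (.lam M) N => (cd M).subst 0 (cd N)
  | .app (.pair M N) P => .pair (.app (cd M) (cd P)) (.app (cd N) (cd P))
  | .app M N => .app (cd M) (cd N)
  | .p1 (.pair M _) => cd M
  | .p1 (.lam M) => .lam (.p1 (cd M))
  | .p1 M => .p1 (cd M)
  | .p2 (.pair _ N) => cd N
  | .p2 (.lam M) => .lam (.p2 (cd M))
  | .p2 M => .p2 (cd M)

/-- Triangle property. -/
theorem Par.triangle : ∀ {a b : Tm}, Par a b → Par b (cd a) := by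
  intro a b h
  induction h with
  | var n => exact .var n
  | lam _ ih => exact .lam ih
  | pair _ _ ih1 ih2 => exact .pair ih1 ih2
  | app hM hN ih1 ih2 =>
    rename_i M M' N N'
    cases M with
    | lam M0 =>
      obtain ⟨M0', rfl, _⟩ := hM.lam_inv
      obtain ⟨_, he, h0⟩ := ih1.lam_inv
      cases he
      exact .beta h0 ih2
    | pair M0 N0 =>
      obtain ⟨M0', N0', rfl, _, _⟩ := hM.pair_inv
      obtain ⟨_, _, he, h1, h2⟩ := ih1.pair_inv
      cases he
      exact .dpi h1 h2 ih2
    | var n => exact .app ih1 ih2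
    | app _ _ => exact .app ih1 ih2
    | p1 _ => exact .app ih1 ih2
    | p2 _ => exact .app ih1 ih2
  | beta _ _ ih1 ih2 => exact ih1.subst 0 ih2
  | dpi _ _ _ ih1 ih2 ih3 => exact .pair (.app ih1 ih3) (.app ih2 ih3)
  | pi1 _ ih => exact ih
  | pi2 _ ih => exact ih
  | pi1lam _ ih => exact .lam (.p1 ih)
  | pi2lam _ ih => exact .lam (.p2 ih)
  | p1 hM ih =>
    rename_i M M'
    cases M with
    | lam M0 =>
      obtain ⟨M0', rfl, _⟩ := hM.lam_inv
      obtain ⟨_, he, h0⟩ := ih.lam_inv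
      cases he
      exact .pi1lam h0
    | pair M0 N0 =>
      obtain ⟨M0', N0', rfl, _, _⟩ := hM.pair_inv
      obtain ⟨_, _, he, h1, _⟩ := ih.pair_inv
      cases he
      exact .pi1 h1
    | var n => exact .p1 ih
    | app _ _ => exact .p1 ih
    | p1 _ => exact .p1 ih
    | p2 _ => exact .p1 ih
  | p2 hM ih =>
    rename_i M M'
    cases M with
    | lam M0 =>
      obtain ⟨M0', rfl, _⟩ := hM.lam_inv
      obtain ⟨_, he, h0⟩ := ih.lam_inv
      cases he
      exact .pi2lam h0
    | pair M0 N0 =>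
      obtain ⟨M0', N0', rfl, _, _⟩ := hM.pair_inv
      obtain ⟨_, _, he, _, h2⟩ := ih.pair_inv
      cases he
      exact .pi2 h2
    | var n => exact .p2 ih
    | app _ _ => exact .p2 ih
    | p1 _ => exact .p2 ih
    | p2 _ => exact .p2 ih

theorem Par.diamond {a b c : Tm} (h1 : Par a b) (h2 : Par a c) :
    ∃ d, Par b d ∧ Par c d :=
  ⟨cd a, h1.triangle, h2.triangle⟩

theorem Par.strip {a b c : Tm} (h1 : Par a b) (h2 : Relation.ReflTransGen Par a c) :
    ∃ d, Relation.ReflTransGen Par b d ∧ Par c d := by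
  induction h2 generalizing b with
  | refl => exact ⟨b, .refl, h1⟩
  | tail _ hstep ih =>
    obtain ⟨d, hbd, hcd⟩ := ih h1
    obtain ⟨e, hde, hce⟩ := hcd.diamond hstep
    exact ⟨e, hbd.tail hde, hce⟩

theorem Par.confluent {a b c : Tm} (h1 : Relation.ReflTransGen Par a b)
    (h2 : Relation.ReflTransGen Par a c) :
    ∃ d, Relation.ReflTransGen Par b d ∧ Relation.ReflTransGen Par c d := by
  induction h1 generalizing c with
  | refl => exact ⟨c, h2, .refl⟩
  | tail _ hstep ih =>
    obtain ⟨d, hbd, hcd⟩ := ih h2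
    obtain ⟨e, hbe, hde⟩ := hstep.strip hbd
    exact ⟨e, hbe, hcd.tail hde⟩

theorem StepR.toPar {a b : Tm} (h : StepR a b) : Par a b := by
  induction h with
  | beta => exact .beta (Par.refl _) (Par.refl _)
  | pi1 => exact .pi1 (Par.refl _)
  | pi2 => exact .pi2 (Par.refl _)
  | dpi => exact .dpi (Par.refl _) (Par.refl _) (Par.refl _)
  | pi1lam => exact .pi1lam (Par.refl _)
  | pi2lam => exact .pi2lam (Par.refl _)
  | lam _ ih => exact .lam ih
  | appL _ ih => exact .app ih (Par.refl _)
  | appR _ ih => exact .app (Par.refl _) ih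
  | pairL _ ih => exact .pair ih (Par.refl _)
  | pairR _ ih => exact .pair (Par.refl _) ih
  | p1 _ ih => exact .p1 ih
  | p2 _ ih => exact .p2 ih

open Relation in
theorem rtg_app {M M' N N' : Tm} (h1 : ReflTransGen StepR M M')
    (h2 : ReflTransGen StepR N N') :
    ReflTransGen StepR (.app M N) (.app M' N') :=
  .trans (ReflTransGen.lift (fun t => Tm.app t N) (fun _ _ h => StepR.appL h) _ _ h1)
    (ReflTransGen.lift (fun t => Tm.app M' t) (fun _ _ h => StepR.appR h) _ _ h2)

open Relation in
theorem rtg_pair {M M' N N' : Tm} (h1 : ReflTransGen StepR M M')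
    (h2 : ReflTransGen StepR N N') :
    ReflTransGen StepR (.pair M N) (.pair M' N') :=
  .trans (ReflTransGen.lift (fun t => Tm.pair t N) (fun _ _ h => StepR.pairL h) _ _ h1)
    (ReflTransGen.lift (fun t => Tm.pair M' t) (fun _ _ h => StepR.pairR h) _ _ h2)

theorem Par.toRTG {a b : Tm} (h : Par a b) : Relation.ReflTransGen StepR a b := by
  induction h with
  | var n => exact .refl
  | app _ _ ih1 ih2 => exact rtg_app ih1 ih2
  | lam _ ih => exact Relation.ReflTransGen.lift Tm.lam (fun _ _ h => StepR.lam h) _ _ ih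
  | pair _ _ ih1 ih2 => exact rtg_pair ih1 ih2
  | p1 _ ih => exact Relation.ReflTransGen.lift Tm.p1 (fun _ _ h => StepR.p1 h) _ _ ih
  | p2 _ ih => exact Relation.ReflTransGen.lift Tm.p2 (fun _ _ h => StepR.p2 h) _ _ ih
  | beta _ _ ih1 ih2 =>
    exact (rtg_app (Relation.ReflTransGen.lift Tm.lam (fun _ _ h => StepR.lam h) _ _ ih1) ih2).tail .beta
  | pi1 _ ih =>
    exact .head .pi1 ih
  | pi2 _ ih =>
    exact .head .pi2 ih
  | dpi _ _ _ ih1 ih2 ih3 =>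
    exact .head .dpi (rtg_pair (rtg_app ih1 ih3) (rtg_app ih2 ih3))
  | pi1lam _ ih =>
    exact .head .pi1lam (Relation.ReflTransGen.lift (fun t => Tm.lam (.p1 t)) (fun _ _ h => StepR.lam (.p1 h)) _ _ ih)
  | pi2lam _ ih =>
    exact .head .pi2lam (Relation.ReflTransGen.lift (fun t => Tm.lam (.p2 t)) (fun _ _ h => StepR.lam (.p2 h)) _ _ ih)

theorem rtgPar_of_rtgStep {a b : Tm} (h : Relation.ReflTransGen StepR a b) :
    Relation.ReflTransGen Par a b :=
  Relation.ReflTransGen.mono (fun _ _ hs => StepR.toPar hs) _ _ h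

theorem rtgStep_of_rtgPar {a b : Tm} (h : Relation.ReflTransGen Par a b) :
    Relation.ReflTransGen StepR a b := by
  induction h with
  | refl => exact .refl
  | tail _ hstep ih => exact ih.trans hstep.toRTG

/-- The reduction relation →_R is confluent. -/
theorem stepR_confluent (M N₁ N₂ : Tm)
    (h₁ : Relation.ReflTransGen StepR M N₁) (h₂ : Relation.ReflTransGen StepR M N₂) :
    ∃ P, Relation.ReflTransGen StepR N₁ P ∧ Relation.ReflTransGen StepR N₂ P := by
  obtain ⟨P, hp1, hp2⟩ := Par.confluent (rtgPar_of_rtgStep h₁) (rtgPar_of_rtgStep h₂)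
  exact ⟨P, rtgStep_of_rtgPar hp1, rtgStep_of_rtgPar hp2⟩
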